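/- Lagrange identity for the confluent Heun operator with exponential weights (subextremal case): Fix reals r₋ < r₊ and parameters s ∈ ℝ, ξ, η, γ, L ∈ ℂ, and let r₊ < A₁ < A₂. Then for all twice continuously differentiable f, h : [A₁, A₂] → ℂ, ∫_{A₁}^{A₂} (h·𝒯_r f − f·𝒯_r h)·(r−r₋)^{2η−s}(r−r₊)^{2ξ−s} e^{2γr} dr = [(h·f′ − f·h′)·(r−r₋)^{2η−s+1}(r−r₊)^{2ξ−s+1} e^{2γr}] evaluated from r = A₁ to r = A₂. -/

import Mathlib

open Real Complex Filter Set MeasureTheory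

noncomputable section

private lemma hasDerivAt_ofReal_sub_cpow (t : ℝ) (c : ℂ) {x : ℝ} (hx : 0 < x - t) :
    HasDerivAt (fun r : ℝ => ((r - t : ℝ) : ℂ) ^ c) (c * ((x - t : ℝ) : ℂ) ^ (c - 1)) x := by
  have h1 : HasDerivAt (fun z : ℂ => (z - (t : ℂ)) ^ c)
      (c * ((x : ℂ) - (t : ℂ)) ^ (c - 1) * 1) (x : ℂ) := by
    refine ((hasDerivAt_id _).sub_const _).cpow_const ?_
    refine Complex.mem_slitPlane_iff.2 (Or.inl ?_)
    simpa using hx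
  have h2 := h1.comp_ofReal
  simpa [Complex.ofReal_sub] using h2

private lemma continuousOn_ofReal_sub_cpow (t : ℝ) (c : ℂ) {A B : ℝ} (ht : t < A) :
    ContinuousOn (fun r : ℝ => ((r - t : ℝ) : ℂ) ^ c) (Set.Icc A B) := by
  intro x hx
  have hx' : 0 < x - t := by linarith [hx.1]
  refine ContinuousAt.continuousWithinAt ?_
  have hbase : ContinuousAt (fun r : ℝ => ((r - t : ℝ) : ℂ)) x :=
    Complex.continuous_ofReal.continuousAt.comp (by fun_prop)
  refine (continuousAt_cpow_const ?_).comp hbase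
  refine Complex.mem_slitPlane_iff.2 (Or.inl ?_)
  simpa using hx'

/-- **Lagrange identity for the confluent Heun operator with exponential weights**
(subextremal case): for `r₊ < A₁ < A₂` and `f, h` twice continuously differentiable on
`[A₁, A₂]` (derivatives taken within `[A₁, A₂]`),
`∫_{A₁}^{A₂} (h·𝒯_r f − f·𝒯_r h)·(r−r₋)^{2η−s}(r−r₊)^{2ξ−s} e^{2γr} dr
  = [(h·f′ − f·h′)·(r−r₋)^{2η−s+1}(r−r₊)^{2ξ−s+1} e^{2γr}]_{A₁}^{A₂}`. -/
theorem lagrange_identity_subextremal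
    (rm rp : ℝ) (hr : rm < rp) (s : ℝ) (ξ η γ L : ℂ)
    (A₁ A₂ : ℝ) (hA₁ : rp < A₁) (hA : A₁ < A₂)
    (f h : ℝ → ℂ)
    (hf : ContDiffOn ℝ 2 f (Set.Icc A₁ A₂)) (hh : ContDiffOn ℝ 2 h (Set.Icc A₁ A₂)) :
    let D : (ℝ → ℂ) → ℝ → ℂ := fun g => derivWithin g (Set.Icc A₁ A₂)
    let T : (ℝ → ℂ) → ℝ → ℂ := fun g r =>
      ((r : ℂ) - (rp : ℂ)) * ((r : ℂ) - (rm : ℂ)) * D (D g) r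
        + ((2 * η + 1 - (s : ℂ)) * ((r : ℂ) - (rp : ℂ))
            + (2 * ξ + 1 - (s : ℂ)) * ((r : ℂ) - (rm : ℂ))
            + 2 * γ * ((r : ℂ) - (rp : ℂ)) * ((r : ℂ) - (rm : ℂ))) * D g r
        + (2 * γ * (1 - 2 * (s : ℂ)) * ((r : ℂ) - (rm : ℂ))
            + 2 * γ * (1 - (s : ℂ)) * (rm : ℂ) - 2 * (s : ℂ) - L) * g r
    let w : ℝ → ℂ := fun r =>
      ((r - rm : ℝ) : ℂ) ^ (2 * η - (s : ℂ)) * ((r - rp : ℝ) : ℂ) ^ (2 * ξ - (s : ℂ)) *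
        Complex.exp (2 * γ * (r : ℂ))
    let wb : ℝ → ℂ := fun r =>
      ((r - rm : ℝ) : ℂ) ^ (2 * η - (s : ℂ) + 1) * ((r - rp : ℝ) : ℂ) ^ (2 * ξ - (s : ℂ) + 1) *
        Complex.exp (2 * γ * (r : ℂ))
    (∫ r in A₁..A₂, (h r * T f r - f r * T h r) * w r)
      = (h A₂ * D f A₂ - f A₂ * D h A₂) * wb A₂
        - (h A₁ * D f A₁ - f A₁ * D h A₁) * wb A₁ := by
  intro D T w wb
  have hUD : UniqueDiffOn ℝ (Set.Icc A₁ A₂) := uniqueDiffOn_Icc hA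
  have hfd : DifferentiableOn ℝ f (Set.Icc A₁ A₂) := hf.differentiableOn two_ne_zero
  have hhd : DifferentiableOn ℝ h (Set.Icc A₁ A₂) := hh.differentiableOn two_ne_zero
  have hf'c : ContDiffOn ℝ 1 (D f) (Set.Icc A₁ A₂) := hf.derivWithin hUD (by norm_num)
  have hh'c : ContDiffOn ℝ 1 (D h) (Set.Icc A₁ A₂) := hh.derivWithin hUD (by norm_num)
  have hf'd : DifferentiableOn ℝ (D f) (Set.Icc A₁ A₂) := hf'c.differentiableOn one_ne_zero
  have hh'd : DifferentiableOn ℝ (D h) (Set.Icc A₁ A₂) := hh'c.differentiableOn one_ne_zero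
  have hf''c : ContinuousOn (D (D f)) (Set.Icc A₁ A₂) :=
    hf'c.continuousOn_derivWithin hUD le_rfl
  have hh''c : ContinuousOn (D (D h)) (Set.Icc A₁ A₂) :=
    hh'c.continuousOn_derivWithin hUD le_rfl
  -- the main pointwise derivative computation
  have key : ∀ x ∈ Set.Icc A₁ A₂,
      HasDerivWithinAt (fun r => (h r * D f r - f r * D h r) * wb r)
        ((h x * T f x - f x * T h x) * w x) (Set.Icc A₁ A₂) x := by
    intro x hx
    have hxm : (0:ℝ) < x - rm := by linarith [hx.1]
    have hxp : (0:ℝ) < x - rp := by linarith [hx.1]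
    have Hf1 : HasDerivWithinAt f (D f x) (Set.Icc A₁ A₂) x := (hfd x hx).hasDerivWithinAt
    have Hh1 : HasDerivWithinAt h (D h x) (Set.Icc A₁ A₂) x := (hhd x hx).hasDerivWithinAt
    have Hf2 : HasDerivWithinAt (D f) (D (D f) x) (Set.Icc A₁ A₂) x :=
      (hf'd x hx).hasDerivWithinAt
    have Hh2 : HasDerivWithinAt (D h) (D (D h) x) (Set.Icc A₁ A₂) x :=
      (hh'd x hx).hasDerivWithinAt
    have P1 : HasDerivAt (fun r : ℝ => ((r - rm : ℝ) : ℂ) ^ (2 * η - (s : ℂ) + 1))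
        ((2 * η - (s : ℂ) + 1) * ((x - rm : ℝ) : ℂ) ^ (2 * η - (s : ℂ))) x := by
      simpa [add_sub_cancel_right] using
        hasDerivAt_ofReal_sub_cpow rm (2 * η - (s : ℂ) + 1) hxm
    have P2 : HasDerivAt (fun r : ℝ => ((r - rp : ℝ) : ℂ) ^ (2 * ξ - (s : ℂ) + 1))
        ((2 * ξ - (s : ℂ) + 1) * ((x - rp : ℝ) : ℂ) ^ (2 * ξ - (s : ℂ))) x := by
      simpa [add_sub_cancel_right] using
        hasDerivAt_ofReal_sub_cpow rp (2 * ξ - (s : ℂ) + 1) hxp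
    have E : HasDerivAt (fun r : ℝ => Complex.exp (2 * γ * (r : ℂ)))
        (2 * γ * Complex.exp (2 * γ * (x : ℂ))) x := by
      have h1 : HasDerivAt (fun z : ℂ => Complex.exp (2 * γ * z))
          (Complex.exp (2 * γ * (x : ℂ)) * (2 * γ * 1)) (x : ℂ) :=
        ((hasDerivAt_id _).const_mul (2 * γ)).cexp
      simpa [mul_comm] using h1.comp_ofReal
    have Hwb : HasDerivAt wb
        (((2 * η - (s : ℂ) + 1) * ((x - rm : ℝ) : ℂ) ^ (2 * η - (s : ℂ)) *
            ((x - rp : ℝ) : ℂ) ^ (2 * ξ - (s : ℂ) + 1)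
          + ((x - rm : ℝ) : ℂ) ^ (2 * η - (s : ℂ) + 1) *
            ((2 * ξ - (s : ℂ) + 1) * ((x - rp : ℝ) : ℂ) ^ (2 * ξ - (s : ℂ)))) *
            Complex.exp (2 * γ * (x : ℂ))
          + ((x - rm : ℝ) : ℂ) ^ (2 * η - (s : ℂ) + 1) *
            ((x - rp : ℝ) : ℂ) ^ (2 * ξ - (s : ℂ) + 1) *
            (2 * γ * Complex.exp (2 * γ * (x : ℂ)))) x := (P1.mul P2).mul E
    have main := ((Hh1.mul Hf2).sub (Hf1.mul Hh2)).mul Hwb.hasDerivWithinAt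
    refine HasDerivWithinAt.congr_deriv main (Eq.symm ?_)
    have hXm : ((x - rm : ℝ) : ℂ) ≠ 0 := by
      simpa using Complex.ofReal_ne_zero.2 (ne_of_gt hxm)
    have hXp : ((x - rp : ℝ) : ℂ) ≠ 0 := by
      simpa using Complex.ofReal_ne_zero.2 (ne_of_gt hxp)
    have e1 : ((x : ℂ) - (rm : ℂ)) ^ (2 * η - (s : ℂ) + 1)
        = ((x : ℂ) - (rm : ℂ)) ^ (2 * η - (s : ℂ)) * ((x : ℂ) - (rm : ℂ)) := by
      rw [Complex.cpow_add _ _ (by push_cast at hXm ⊢; exact hXm), Complex.cpow_one]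
    have e2 : ((x : ℂ) - (rp : ℂ)) ^ (2 * ξ - (s : ℂ) + 1)
        = ((x : ℂ) - (rp : ℂ)) ^ (2 * ξ - (s : ℂ)) * ((x : ℂ) - (rp : ℂ)) := by
      rw [Complex.cpow_add _ _ (by push_cast at hXp ⊢; exact hXp), Complex.cpow_one]
    show (h x * T f x - f x * T h x) * w x = _
    simp only [T, w, wb, Complex.ofReal_sub, Pi.mul_apply, Pi.sub_apply]
    rw [e1, e2]
    ring
  -- continuity of the boundary function
  have hwbc : ContinuousOn wb (Set.Icc A₁ A₂) := by
    refine ContinuousOn.mul (ContinuousOn.mul ?_ ?_) ?_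
    · exact continuousOn_ofReal_sub_cpow rm _ (hr.trans hA₁)
    · exact continuousOn_ofReal_sub_cpow rp _ hA₁
    · exact (Complex.continuous_exp.comp (by fun_prop)).continuousOn
  have hwc : ContinuousOn w (Set.Icc A₁ A₂) := by
    refine ContinuousOn.mul (ContinuousOn.mul ?_ ?_) ?_
    · exact continuousOn_ofReal_sub_cpow rm _ (hr.trans hA₁)
    · exact continuousOn_ofReal_sub_cpow rp _ hA₁
    · exact (Complex.continuous_exp.comp (by fun_prop)).continuousOn
  have hFc : ContinuousOn (fun r => (h r * D f r - f r * D h r) * wb r) (Set.Icc A₁ A₂) := by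
    refine ContinuousOn.mul (ContinuousOn.sub ?_ ?_) hwbc
    · exact hh.continuousOn.mul hf'c.continuousOn
    · exact hf.continuousOn.mul hh'c.continuousOn
  have hTfc : ContinuousOn (T f) (Set.Icc A₁ A₂) := by
    refine ContinuousOn.add (ContinuousOn.add ?_ ?_) ?_
    · exact (Continuous.continuousOn (by fun_prop)).mul hf''c
    · exact (Continuous.continuousOn (by fun_prop)).mul hf'c.continuousOn
    · exact (Continuous.continuousOn (by fun_prop)).mul hf.continuousOn
  have hThc : ContinuousOn (T h) (Set.Icc A₁ A₂) := by
    refine ContinuousOn.add (ContinuousOn.add ?_ ?_) ?_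
    · exact (Continuous.continuousOn (by fun_prop)).mul hh''c
    · exact (Continuous.continuousOn (by fun_prop)).mul hh'c.continuousOn
    · exact (Continuous.continuousOn (by fun_prop)).mul hh.continuousOn
  have hic : ContinuousOn (fun r => (h r * T f r - f r * T h r) * w r) (Set.Icc A₁ A₂) :=
    ((hh.continuousOn.mul hTfc).sub (hf.continuousOn.mul hThc)).mul hwc
  have hint : IntervalIntegrable (fun r => (h r * T f r - f r * T h r) * w r) volume A₁ A₂ := by
    apply ContinuousOn.intervalIntegrable
    rwa [Set.uIcc_of_le hA.le]
  exact intervalIntegral.integral_eq_sub_of_hasDeriv_right_of_le hA.le hFc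
    (fun x hx => ((key x (Set.Ioo_subset_Icc_self hx)).hasDerivAt
      (Icc_mem_nhds hx.1 hx.2)).hasDerivWithinAt) hint
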